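/- Let p be an odd prime, q a power of p, D an additive subgroup of F_q with |D| = n, and γ ∈ F_q. Let Ū_m(γ) be the number of m-tuples of pairwise distinct elements (x_1,...,x_m) ∈ D^m with x_1 + ... + x_m = γ. Then for γ ∈ D: Ū_m(γ)/m! = (1/n) C(n, m) + (−1)^{m + m/p} ((n·[γ=0] − 1)/n) C(n/p, m/p) if p | m, and Ū_m(γ)/m! = (1/n) C(n, m) if p ∤ m. -/

import Mathlib

open Finset Polynomial

namespace Stmt14Aux

variable {G : Type*} [AddCommGroup G] [Fintype G] [DecidableEq G]

lemma addChar_map_sum (ψ : AddChar G ℂ) (s : Finset G) :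
    ψ (∑ d ∈ s, d) = ∏ d ∈ s, ψ d := by
  induction s using Finset.cons_induction with
  | empty => simp
  | cons a s ha ih => rw [Finset.sum_cons, Finset.prod_cons, AddChar.map_add_eq_mul, ih]

/-- esymm of a nontrivial additive character of an elementary abelian `p`-group. -/
lemma esymm_addChar (p : ℕ) (hp : p.Prime) (hodd : p ≠ 2)
    (hG : ∀ g : G, p • g = 0) (ψ : AddChar G ℂ) (hψ : ψ ≠ 0) (m : ℕ) :
    ∑ t ∈ (Finset.univ : Finset G).powersetCard m, ∏ d ∈ t, ψ d =
      if p ∣ m then ((Fintype.card G / p).choose (m / p) : ℂ) else 0 := by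
  classical
  haveI : Fact p.Prime := ⟨hp⟩
  haveI : NeZero p := ⟨hp.ne_zero⟩
  set n' := Fintype.card G with hn'
  obtain ⟨d₀, hd₀⟩ := AddChar.ne_zero_iff.mp hψ
  have hroot : ∀ d : G, ψ d ^ p = 1 := fun d => by
    rw [← AddChar.map_nsmul_eq_pow, hG, AddChar.map_zero_eq_one]
  have hp0 : 0 < p := hp.pos
  have hord : orderOf (ψ d₀) = p := orderOf_eq_prime (hroot d₀) hd₀
  have hprim : IsPrimitiveRoot (ψ d₀) p :=
    ⟨hroot d₀, fun l hl => hord ▸ orderOf_dvd_of_pow_eq_one hl⟩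
  have himg : Finset.univ.image ψ = nthRootsFinset p (1 : ℂ) := by
    apply Finset.Subset.antisymm
    · intro z hz
      obtain ⟨d, _, rfl⟩ := Finset.mem_image.mp hz
      exact (mem_nthRootsFinset hp0 (1 : ℂ)).mpr (hroot d)
    · intro z hz
      obtain ⟨i, _, hi⟩ := hprim.eq_pow_of_pow_eq_one ((mem_nthRootsFinset hp0 (1 : ℂ)).mp hz)
      exact Finset.mem_image.mpr ⟨i • d₀, Finset.mem_univ _,
        by rw [AddChar.map_nsmul_eq_pow, hi]⟩
  set c := (Finset.univ.filter (fun d : G => ψ d = 1)).card with hc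
  have hfib : ∀ z ∈ nthRootsFinset p (1 : ℂ),
      (Finset.univ.filter (fun d : G => ψ d = z)).card = c := by
    intro z hz
    rw [← himg] at hz
    obtain ⟨d₁, -, rfl⟩ := Finset.mem_image.mp hz
    have hne : ψ d₁ ≠ 0 := fun h => by
      simpa [h, zero_pow hp.ne_zero] using hroot d₁
    rw [hc]
    apply Finset.card_bij (fun d _ => d - d₁)
    · intro a ha
      simp only [Finset.mem_filter, Finset.mem_univ, true_and] at ha ⊢
      rw [AddChar.map_sub_eq_div, ha, div_self hne]
    · intro a₁ h₁ a₂ h₂ h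
      exact sub_left_injective h
    · intro b hb
      simp only [Finset.mem_filter, Finset.mem_univ, true_and] at hb
      refine ⟨b + d₁, ?_, by abel⟩
      simp only [Finset.mem_filter, Finset.mem_univ, true_and,
        AddChar.map_add_eq_mul, hb, one_mul]
  have hcard : n' = p * c := by
    have h0 := Finset.card_eq_sum_card_fiberwise
      (f := ψ) (s := Finset.univ) (t := nthRootsFinset p (1 : ℂ))
      (fun d _ => himg ▸ Finset.mem_image_of_mem ψ (Finset.mem_univ d))
    rw [Finset.card_univ] at h0
    rw [hn', h0, Finset.sum_congr rfl hfib, Finset.sum_const, smul_eq_mul,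
      hprim.card_nthRootsFinset]
  have hodd' : Odd p := hp.odd_of_ne_two hodd
  have hkey : ∏ z ∈ nthRootsFinset p (1 : ℂ), (X + C z) = (X : ℂ[X]) ^ p + 1 := by
    have h1 : ((X : ℂ[X]) ^ p - 1).comp (-X) =
        ∏ z ∈ nthRootsFinset p (1 : ℂ), ((X - C z).comp (-X)) := by
      rw [X_pow_sub_one_eq_prod hp0 hprim, Polynomial.prod_comp]
    simp only [Polynomial.sub_comp, Polynomial.pow_comp, Polynomial.X_comp,
      Polynomial.one_comp, Polynomial.C_comp] at h1
    rw [hodd'.neg_pow] at h1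
    have h2 : ∀ z ∈ nthRootsFinset p (1 : ℂ), (-X - C z : ℂ[X]) = -1 * (X + C z) :=
      fun z _ => by ring
    rw [Finset.prod_congr rfl h2, Finset.prod_mul_distrib, Finset.prod_const,
      hprim.card_nthRootsFinset, hodd'.neg_pow, one_pow] at h1
    have : -((X : ℂ[X]) ^ p + 1) = -1 * ∏ z ∈ nthRootsFinset p (1 : ℂ), (X + C z) := by
      linear_combination h1
    linear_combination this
  have hpoly : ∏ d : G, ((X : ℂ[X]) + C (ψ d)) = ((X : ℂ[X]) ^ p + 1) ^ c := by
    rw [← Finset.prod_fiberwise_of_maps_to (g := ψ) (t := nthRootsFinset p (1 : ℂ))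
        (fun d _ => himg ▸ Finset.mem_image_of_mem ψ (Finset.mem_univ d))
        (fun d => (X : ℂ[X]) + C (ψ d))]
    have h3 : ∀ z ∈ nthRootsFinset p (1 : ℂ),
        ∏ d ∈ Finset.univ.filter (fun d : G => ψ d = z), ((X : ℂ[X]) + C (ψ d))
          = (X + C z) ^ c := by
      intro z hz
      rw [Finset.prod_congr rfl (fun d hd => by
        rw [(Finset.mem_filter.mp hd).2]), Finset.prod_const, hfib z hz]
    rw [Finset.prod_congr rfl h3, Finset.prod_pow, hkey]
  by_cases hm : m ≤ n'
  · -- coefficient extraction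
    have hun : (Finset.univ : Finset G).card = n' := Finset.card_univ
    have key := Finset.prod_X_add_C_coeff (Finset.univ : Finset G)
      (fun d => ψ d) (k := n' - m) (by rw [hun]; omega)
    rw [hpoly, hun] at key
    have hnm : n' - (n' - m) = m := by omega
    rw [hnm] at key
    rw [← key]
    -- now compute the coefficient of (X^p+1)^c
    have hexp : (((X : ℂ[X]) ^ p + 1) ^ c) =
        ∑ k ∈ Finset.range (c + 1), C (c.choose k : ℂ) * X ^ (p * k) := by
      rw [add_pow]
      refine Finset.sum_congr rfl fun k hk => ?_
      rw [one_pow, mul_one, ← pow_mul, mul_comm (X ^ (p * k))]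
      norm_cast
    rw [hexp, Polynomial.finset_sum_coeff]
    simp only [Polynomial.coeff_C_mul, Polynomial.coeff_X_pow]
    have hpn : p ∣ n' := ⟨c, hcard⟩
    by_cases hpm : p ∣ m
    · obtain ⟨a, rfl⟩ := hpm
      have ham : (p * a) / p = a := Nat.mul_div_cancel_left a hp0
      have hac : a ≤ c := by
        by_contra hac
        push_neg at hac
        have : p * c < p * a := by
          exact Nat.mul_lt_mul_of_le_of_lt (le_refl p) hac hp0
        omega
      have hsub : n' - p * a = p * (c - a) := by
        rw [hcard, Nat.mul_sub]
      rw [if_pos ⟨a, rfl⟩, ham]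
      have hcn : n' / p = c := by rw [hcard, Nat.mul_div_cancel_left c hp0]
      rw [hcn]
      rw [Finset.sum_eq_single (c - a)]
      · rw [hsub, if_pos rfl, mul_one, Nat.choose_symm hac]
      · intro k hk hkne
        rw [if_neg, mul_zero]
        rw [hsub]
        intro h
        exact hkne (Nat.eq_of_mul_eq_mul_left hp0 h.symm)
      · intro h
        exfalso
        exact h (Finset.mem_range.mpr (by omega))
    · rw [if_neg hpm]
      refine Finset.sum_eq_zero fun k hk => ?_
      rw [if_neg, mul_zero]
      intro h
      apply hpm
      have : p ∣ n' - m := ⟨k, h⟩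
      have : m = n' - (n' - m) := by omega
      rw [this]
      exact Nat.dvd_sub hpn ‹p ∣ n' - m›
  · -- m > n' : no subsets of size m
    push_neg at hm
    have hemp : (Finset.univ : Finset G).powersetCard m = ∅ := by
      exact Finset.powersetCard_eq_empty.mpr (by rw [Finset.card_univ]; omega)
    rw [hemp, Finset.sum_empty]
    have hpn : p ∣ n' := ⟨c, hcard⟩
    split_ifs with hpm
    · rw [Nat.choose_eq_zero_of_lt, Nat.cast_zero]
      exact Nat.div_lt_div_of_lt_of_dvd hpm hm
    · rfl

/-- Orthogonality-based count of `m`-subsets with given sum. -/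
lemma key_count (p : ℕ) (hp : p.Prime) (hodd : p ≠ 2) (hG : ∀ g : G, p • g = 0)
    (m : ℕ) (γ : G) :
    (Fintype.card G : ℂ) *
        ((((Finset.univ : Finset G).powersetCard m).filter (fun s => ∑ d ∈ s, d = γ)).card : ℂ) =
      ((Fintype.card G).choose m : ℂ) +
        (if p ∣ m then ((Fintype.card G : ℂ) * (if γ = 0 then 1 else 0) - 1) *
          ((Fintype.card G / p).choose (m / p) : ℂ) else 0) := by
  classical
  set P := (Finset.univ : Finset G).powersetCard m with hP
  set e : ℂ := if p ∣ m then ((Fintype.card G / p).choose (m / p) : ℂ) else 0 with he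
  have hsum : ∀ s : Finset G, (∑ ψ : AddChar G ℂ, ψ ((∑ d ∈ s, d) - γ))
      = if (∑ d ∈ s, d) = γ then (Fintype.card G : ℂ) else 0 := by
    intro s
    rw [AddChar.sum_apply_eq_ite]
    exact if_congr sub_eq_zero rfl rfl
  have hL : ∑ s ∈ P, ∑ ψ : AddChar G ℂ, ψ ((∑ d ∈ s, d) - γ)
      = (Fintype.card G : ℂ) * ((P.filter (fun s => ∑ d ∈ s, d = γ)).card : ℂ) := by
    simp_rw [hsum]
    rw [← Finset.sum_filter, Finset.sum_const, nsmul_eq_mul, mul_comm]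
  have hswap : ∀ ψ : AddChar G ℂ, (∑ s ∈ P, ψ ((∑ d ∈ s, d) - γ))
      = ψ (-γ) * ∑ s ∈ P, ∏ d ∈ s, ψ d := by
    intro ψ
    rw [Finset.mul_sum]
    refine Finset.sum_congr rfl fun s hs => ?_
    rw [sub_eq_add_neg, add_comm, AddChar.map_add_eq_mul, addChar_map_sum]
  have hR : ∑ s ∈ P, ∑ ψ : AddChar G ℂ, ψ ((∑ d ∈ s, d) - γ)
      = ((Fintype.card G).choose m : ℂ) +
        ((if γ = 0 then (Fintype.card G : ℂ) else 0) - 1) * e := by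
    rw [Finset.sum_comm]
    simp_rw [hswap]
    rw [← Finset.sum_erase_add _ _ (Finset.mem_univ (0 : AddChar G ℂ))]
    have h0 : (0 : AddChar G ℂ) (-γ) * (∑ s ∈ P, ∏ d ∈ s, (0 : AddChar G ℂ) d)
        = ((Fintype.card G).choose m : ℂ) := by
      simp [hP, Finset.card_powersetCard]
    have h1 : ∑ ψ ∈ (Finset.univ : Finset (AddChar G ℂ)).erase 0,
        ψ (-γ) * (∑ s ∈ P, ∏ d ∈ s, ψ d)
        = ((if γ = 0 then (Fintype.card G : ℂ) else 0) - 1) * e := by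
      have h2 : ∀ ψ ∈ (Finset.univ : Finset (AddChar G ℂ)).erase 0,
          ψ (-γ) * (∑ s ∈ P, ∏ d ∈ s, ψ d) = ψ (-γ) * e := by
        intro ψ hψ
        rw [hP, esymm_addChar p hp hodd hG ψ (Finset.mem_erase.mp hψ).1, he]
      rw [Finset.sum_congr rfl h2, ← Finset.sum_mul,
        Finset.sum_erase_eq_sub (Finset.mem_univ _), AddChar.sum_apply_eq_ite,
        AddChar.zero_apply]
      congr 2
      exact if_congr neg_eq_zero rfl rfl
    rw [h0, h1]
    ring
  rw [← hL, hR, he]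
  split_ifs <;> ring

/-- The number of functions `Fin m → M` with image a given `m`-set is `m!`. -/
lemma card_image_eq {M : Type*} [Fintype M] [DecidableEq M] {m : ℕ} (s : Finset M)
    (hs : s.card = m) :
    ((Finset.univ : Finset (Fin m → M)).filter
      (fun y => Finset.univ.image y = s)).card = m.factorial := by
  classical
  set E := s.equivFinOfCardEq hs with hE
  set g0 : Fin m → M := fun i => (E.symm i : M) with hg0
  have hg0inj : Function.Injective g0 := fun a b hab =>
    E.symm.injective (Subtype.ext hab)
  have hg0img : Finset.univ.image g0 = s := by
    apply Finset.eq_of_subset_of_card_le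
    · intro z hz
      obtain ⟨i, -, rfl⟩ := Finset.mem_image.mp hz
      exact (E.symm i).2
    · rw [Finset.card_image_of_injective _ hg0inj, Finset.card_univ, Fintype.card_fin, hs]
  have himg : (Finset.univ : Finset (Fin m → M)).filter (fun y => Finset.univ.image y = s)
      = Finset.univ.image (fun π : Equiv.Perm (Fin m) => g0 ∘ π) := by
    ext y
    simp only [Finset.mem_filter, Finset.mem_univ, true_and, Finset.mem_image]
    constructor
    · intro hy
      have hyinj : Function.Injective y := by
        rw [← Set.injOn_univ, ← Finset.coe_univ]
        apply Finset.card_image_iff.mp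
        rw [hy, hs, Finset.card_univ, Fintype.card_fin]
      have hmem : ∀ i, y i ∈ s := fun i => by
        rw [← hy]; exact Finset.mem_image_of_mem _ (Finset.mem_univ i)
      set π0 : Fin m → Fin m := fun i => E ⟨y i, hmem i⟩ with hπ0
      have hπ0inj : Function.Injective π0 := fun a b hab =>
        hyinj (congrArg Subtype.val (E.injective hab))
      refine ⟨Equiv.ofBijective π0 ((Finite.injective_iff_bijective).mp hπ0inj), ?_⟩
      funext i
      show g0 (π0 i) = y i
      rw [hπ0, hg0]
      simp
    · rintro ⟨π, rfl⟩
      rw [← Finset.image_image]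
      have hπu : Finset.univ.image (⇑π) = Finset.univ := by
        ext j
        simpa using ⟨π.symm j, π.apply_symm_apply j⟩
      rw [hπu, hg0img]
  rw [himg, Finset.card_image_of_injective, Finset.card_univ, Fintype.card_perm,
    Fintype.card_fin]
  intro π σ h
  exact Equiv.ext fun i => hg0inj (congrFun h i)

/-- Number of injective tuples with given sum equals `m!` times the number of `m`-sets. -/
lemma card_tuples {M : Type*} [AddCommMonoid M] [Fintype M] [DecidableEq M] (m : ℕ) (γ : M) :
    Nat.card {y : Fin m → M // Function.Injective y ∧ ∑ i, y i = γ} =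
      m.factorial * (((Finset.univ : Finset M).powersetCard m).filter
        (fun s => ∑ d ∈ s, d = γ)).card := by
  classical
  rw [Nat.card_eq_fintype_card, Fintype.card_subtype]
  rw [Finset.card_eq_sum_card_fiberwise (f := fun y => Finset.univ.image y)
      (t := ((Finset.univ : Finset M).powersetCard m).filter (fun s => ∑ d ∈ s, d = γ))
      ?_]
  · rw [Finset.sum_congr rfl ?_, Finset.sum_const, smul_eq_mul, mul_comm]
    intro s hs
    obtain ⟨hs1, hs2⟩ := Finset.mem_filter.mp hs
    have hsc : s.card = m := (Finset.mem_powersetCard.mp hs1).2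
    have hfil : ((Finset.univ : Finset (Fin m → M)).filter
          (fun y => Function.Injective y ∧ ∑ i, y i = γ)).filter
          (fun y => Finset.univ.image y = s)
        = (Finset.univ : Finset (Fin m → M)).filter (fun y => Finset.univ.image y = s) := by
      ext y
      simp only [Finset.mem_filter, Finset.mem_univ, true_and]
      constructor
      · rintro ⟨-, h⟩; exact h
      · intro h
        have hyinj : Function.Injective y := by
          rw [← Set.injOn_univ, ← Finset.coe_univ]
          apply Finset.card_image_iff.mp
          rw [h, hsc, Finset.card_univ, Fintype.card_fin]
        refine ⟨⟨hyinj, ?_⟩, h⟩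
        rw [← hs2, ← h, Finset.sum_image ?_]
        intro a _ b _ hab
        exact hyinj hab
    rw [hfil, card_image_eq s hsc]
  · intro y hy
    obtain ⟨hyinj, hysum⟩ := (Finset.mem_filter.mp hy).2
    refine Finset.mem_filter.mpr ⟨Finset.mem_powersetCard.mpr ⟨Finset.subset_univ _, ?_⟩, ?_⟩
    · rw [Finset.card_image_of_injective _ hyinj, Finset.card_univ, Fintype.card_fin]
    · rw [Finset.sum_image (fun a _ b _ hab => hyinj hab)]
      exact hysum

end Stmt14Aux


/-- Let `F_q` have odd characteristic `p`, let `D` be an additive subgroup of size `n`,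
and `γ ∈ D`.  Let `Ū_m(γ)` count `m`-tuples of pairwise distinct elements of `D` summing
to `γ`.  Then `Ū_m(γ)/m! = C(n,m)/n + [p ∣ m] (-1)^{m+m/p} ((n[γ=0]-1)/n) C(n/p, m/p)`. -/
theorem stmt14 {F : Type*} [Field F] [Fintype F] [DecidableEq F] (p : ℕ) (hp : p.Prime) (hodd : p ≠ 2)
    [CharP F p] (D : AddSubgroup F) (n m : ℕ) (hn : Nat.card D = n)
    (γ : F) (hγ : γ ∈ D) :
    (Nat.card {x : Fin m → F // (∀ i, x i ∈ D) ∧ Function.Injective x ∧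
        ∑ i, x i = γ} : ℚ) / (m.factorial : ℚ) =
      (n.choose m : ℚ) / n +
        (if p ∣ m then
          (-1 : ℚ) ^ (m + m / p) *
            (((n : ℚ) * (if γ = 0 then 1 else 0) - 1) / n) *
            ((n / p).choose (m / p) : ℚ)
        else 0) := by
  classical
  letI : Fintype ↥D := Fintype.ofFinite _
  have hnD : Fintype.card ↥D = n := by rw [← Nat.card_eq_fintype_card, hn]
  have hn0 : 0 < n := by
    rw [← hn]
    exact Nat.card_pos
  set γ' : ↥D := ⟨γ, hγ⟩ with hγ'
  have coe_sum : ∀ (y : Fin m → ↥D), ((∑ i, y i : ↥D) : F) = ∑ i, (y i : F) := fun y =>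
    map_sum D.subtype y Finset.univ
  have hsmul : ∀ g : ↥D, p • g = 0 := by
    intro g
    apply Subtype.ext
    show p • (g : F) = 0
    rw [nsmul_eq_mul, CharP.cast_eq_zero F p, zero_mul]
  have hcardT : Nat.card {x : Fin m → F // (∀ i, x i ∈ D) ∧ Function.Injective x ∧
        ∑ i, x i = γ}
      = Nat.card {y : Fin m → ↥D // Function.Injective y ∧ ∑ i, y i = γ'} := by
    apply Nat.card_congr
    refine ⟨fun x => ⟨fun i => ⟨x.1 i, x.2.1 i⟩,
        fun a b hab => x.2.2.1 (congrArg Subtype.val hab),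
        Subtype.ext (by rw [coe_sum]; exact x.2.2.2)⟩,
      fun y => ⟨fun i => (y.1 i : F), fun i => (y.1 i).2,
        fun a b hab => y.2.1 (Subtype.ext hab),
        by rw [← coe_sum, y.2.2]⟩,
      fun x => Subtype.ext rfl, fun y => Subtype.ext rfl⟩
  have hγ0 : (γ' = 0) = (γ = 0) := by
    simp [hγ', Subtype.ext_iff]
  have hC := Stmt14Aux.key_count p hp hodd hsmul m γ'
  rw [hnD] at hC
  simp only [hγ0] at hC
  set N := (((Finset.univ : Finset ↥D).powersetCard m).filter
    (fun s => ∑ d ∈ s, d = γ')).card with hN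
  have hQ : (n : ℚ) * N = (n.choose m : ℚ) +
      (if p ∣ m then ((n : ℚ) * (if γ = 0 then 1 else 0) - 1) *
        ((n / p).choose (m / p) : ℚ) else 0) := by
    apply (Rat.cast_injective (α := ℂ))
    push_cast
    split_ifs at hC ⊢ <;> · push_cast; linear_combination hC
  have hsign : p ∣ m → ((-1 : ℚ) ^ (m + m / p)) = 1 := by
    intro hpm
    obtain ⟨k, rfl⟩ := hpm
    rw [Nat.mul_div_cancel_left k hp.pos]
    refine Even.neg_one_pow ?_
    obtain ⟨t, ht⟩ := hp.odd_of_ne_two hodd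
    exact ⟨t * k + k, by rw [ht]; ring⟩
  rw [hcardT, Stmt14Aux.card_tuples m γ', ← hN]
  have hm0 : (m.factorial : ℚ) ≠ 0 := Nat.cast_ne_zero.mpr m.factorial_ne_zero
  have hn0' : (n : ℚ) ≠ 0 := Nat.cast_ne_zero.mpr hn0.ne'
  rw [Nat.cast_mul, mul_comm ((m.factorial : ℕ) : ℚ), mul_div_assoc,
    div_self hm0, mul_one]
  by_cases hpm : p ∣ m
  · rw [if_pos hpm] at hQ ⊢
    rw [hsign hpm, one_mul]
    rw [mul_ite, mul_one, mul_zero] at hQ ⊢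
    field_simp
    linear_combination hQ
  · rw [if_neg hpm] at hQ ⊢
    rw [add_zero] at hQ
    rw [add_zero]
    field_simp
    linear_combination hQ
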